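/- Let a ∈ ℤ^n be a non-zero vector and b ∈ ℤ. If v is a vertex of the integer hull of the knapsack polytope {x ≥ 0 : aᵀx = b} with support of size s, then 2^s ≤ ‖a‖₁ + 1; equivalently s ≤ log₂(‖a‖₁ + 1). -/

import Mathlib

/-- The integer hull of the knapsack polytope `{x ≥ 0 : aᵀx = b}`. -/
def knapsackHull {n : ℕ} (a : Fin n → ℤ) (b : ℤ) : Set (Fin n → ℝ) :=
  convexHull ℝ
    {x | ∃ z : Fin n → ℤ, (∀ i, 0 ≤ z i) ∧ (∑ i, a i * z i) = b ∧ x = fun i => (z i : ℝ)}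

/-- `v` is a vertex of `P` if `v ∈ P` and `v` is not in the convex hull of `P \ {v}`. -/
def IsVertex {n : ℕ} (P : Set (Fin n → ℝ)) (v : Fin n → ℝ) : Prop :=
  v ∈ P ∧ v ∉ convexHull ℝ (P \ {v})

theorem stmt1 {n : ℕ} (a : Fin n → ℤ) (ha : a ≠ 0) (b : ℤ) (v : Fin n → ℝ)
    (hv : IsVertex (knapsackHull a b) v) :
    (2 : ℤ) ^ (Function.support v).ncard ≤ (∑ i, |a i|) + 1 := by
  obtain ⟨hvP, hvX⟩ := hv
  set S : Set (Fin n → ℝ) :=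
    {x | ∃ z : Fin n → ℤ, (∀ i, 0 ≤ z i) ∧ (∑ i, a i * z i) = b ∧ x = fun i => (z i : ℝ)}
    with hSdef
  -- the vertex is an integer point
  have hvS : v ∈ S := by
    by_contra h
    apply hvX
    have hsub : S ⊆ knapsackHull a b \ {v} := fun x hx =>
      ⟨subset_convexHull ℝ S hx, fun hxv => h (by rwa [Set.mem_singleton_iff.mp hxv] at hx)⟩
    exact convexHull_mono hsub hvP
  obtain ⟨z, hz0, hzb, hvz⟩ := hvS
  -- support as a finset
  set T : Finset (Fin n) := Finset.univ.filter (fun i => z i ≠ 0) with hTdef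
  have hsupp : Function.support v = (T : Set (Fin n)) := by
    ext i
    simp [hvz, Function.support, hTdef, Int.cast_eq_zero]
  have hTcard : (Function.support v).ncard = T.card := by
    rw [hsupp, Set.ncard_coe_finset]
  rw [hTcard]
  by_contra hcon
  push_neg at hcon
  -- pigeonhole on subset sums
  set lo : ℤ := ∑ i ∈ T, min (a i) 0 with hlo
  set hi : ℤ := ∑ i ∈ T, max (a i) 0 with hhi
  have hlo0 : lo ≤ 0 := Finset.sum_nonpos (fun i _ => min_le_right _ 0)
  have hhi0 : 0 ≤ hi := Finset.sum_nonneg (fun i _ => le_max_right _ 0)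
  have hmaps : ∀ U ∈ T.powerset, (∑ i ∈ U, a i) ∈ Finset.Icc lo hi := by
    intro U hU
    rw [Finset.mem_powerset] at hU
    rw [Finset.mem_Icc]
    constructor
    · have h1 : ∑ i ∈ U, -min (a i) 0 ≤ ∑ i ∈ T, -min (a i) 0 :=
        Finset.sum_le_sum_of_subset_of_nonneg hU
          (fun i _ _ => neg_nonneg.mpr (min_le_right _ 0))
      have h2 : ∑ i ∈ U, min (a i) 0 ≤ ∑ i ∈ U, a i :=
        Finset.sum_le_sum (fun i _ => min_le_left _ 0)
      simp only [Finset.sum_neg_distrib] at h1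
      rw [hlo]
      omega
    · have h1 : ∑ i ∈ U, a i ≤ ∑ i ∈ U, max (a i) 0 :=
        Finset.sum_le_sum (fun i _ => le_max_left _ 0)
      have h2 : ∑ i ∈ U, max (a i) 0 ≤ hi :=
        Finset.sum_le_sum_of_subset_of_nonneg hU (fun i _ _ => le_max_right _ 0)
      omega
  have hicard : ((Finset.Icc lo hi).card : ℤ) = hi + 1 - lo := by
    rw [Int.card_Icc]
    exact Int.toNat_of_nonneg (by omega)
  have hirange : hi - lo ≤ ∑ i, |a i| := by
    have heq : hi - lo = ∑ i ∈ T, |a i| := by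
      rw [hhi, hlo, ← Finset.sum_sub_distrib]
      apply Finset.sum_congr rfl
      intro i _
      rcases le_total (a i) 0 with h | h
      · rw [max_eq_right h, min_eq_left h, abs_of_nonpos h]; ring
      · rw [max_eq_left h, min_eq_right h, abs_of_nonneg h]; ring
    rw [heq]
    exact Finset.sum_le_sum_of_subset_of_nonneg (Finset.subset_univ T)
      (fun i _ _ => abs_nonneg _)
  have hcard : (Finset.Icc lo hi).card < T.powerset.card := by
    rw [Finset.card_powerset]
    have h2 : ((2:ℤ))^T.card = ((2^T.card : ℕ) : ℤ) := by push_cast; ring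
    have h3 : ((Finset.Icc lo hi).card : ℤ) < ((2^T.card : ℕ) : ℤ) := by
      rw [hicard, ← h2]; omega
    exact_mod_cast h3
  obtain ⟨U, hU, W, hW, hUW, hsum⟩ :=
    Finset.exists_ne_map_eq_of_card_lt_of_maps_to hcard hmaps
  rw [Finset.mem_powerset] at hU hW
  set U' : Finset (Fin n) := U \ W with hU'def
  set W' : Finset (Fin n) := W \ U with hW'def
  have hdisj : Disjoint U' W' := disjoint_sdiff_sdiff
  have hsum' : ∑ i ∈ U', a i = ∑ i ∈ W', a i := by
    have h1 : ∑ i ∈ U ∩ W, a i + ∑ i ∈ U \ W, a i = ∑ i ∈ U, a i :=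
      Finset.sum_inter_add_sum_sdiff U W a
    have h2 : ∑ i ∈ W ∩ U, a i + ∑ i ∈ W \ U, a i = ∑ i ∈ W, a i :=
      Finset.sum_inter_add_sum_sdiff W U a
    rw [Finset.inter_comm] at h2
    rw [hU'def, hW'def]
    omega
  have hne : U'.Nonempty ∨ W'.Nonempty := by
    by_contra h
    push_neg at h
    apply hUW
    have h1 : U ⊆ W :=
      Finset.sdiff_eq_empty_iff_subset.mp h.1
    have h2 : W ⊆ U :=
      Finset.sdiff_eq_empty_iff_subset.mp h.2
    exact Finset.Subset.antisymm h1 h2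
  -- the kernel vector
  set c : Fin n → ℤ := fun i => (if i ∈ U' then 1 else 0) - (if i ∈ W' then 1 else 0)
    with hcdef
  have hcU' : ∀ i ∈ U', c i = 1 := by
    intro i hi'
    have h' : i ∉ W' := Finset.disjoint_left.mp hdisj hi'
    simp [hcdef, hi', h']
  have hcW' : ∀ i ∈ W', c i = -1 := by
    intro i hi'
    have h' : i ∉ U' := Finset.disjoint_right.mp hdisj hi'
    simp [hcdef, hi', h']
  have hc_bd : ∀ i, c i = 0 ∨ (i ∈ T ∧ (c i = 1 ∨ c i = -1)) := by
    intro i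
    by_cases h1 : i ∈ U'
    · exact Or.inr ⟨hU (Finset.mem_sdiff.mp h1).1, Or.inl (hcU' i h1)⟩
    · by_cases h2 : i ∈ W'
      · exact Or.inr ⟨hW (Finset.mem_sdiff.mp h2).1, Or.inr (hcW' i h2)⟩
      · left; simp [hcdef, h1, h2]
  have hzT : ∀ i ∈ T, 1 ≤ z i := by
    intro i hi'
    have h1 := hz0 i
    have h2 : z i ≠ 0 := (Finset.mem_filter.mp hi').2
    omega
  have hfeasP : ∀ i, 0 ≤ z i + c i := by
    intro i
    rcases hc_bd i with h | ⟨hT, h⟩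
    · have := hz0 i; omega
    · have := hzT i hT; omega
  have hfeasM : ∀ i, 0 ≤ z i - c i := by
    intro i
    rcases hc_bd i with h | ⟨hT, h⟩
    · have := hz0 i; omega
    · have := hzT i hT; omega
  have hc_sum : ∑ i, a i * c i = 0 := by
    have e1 : ∀ V : Finset (Fin n),
        ∑ i, a i * (if i ∈ V then (1:ℤ) else 0) = ∑ i ∈ V, a i := by
      intro V
      simp only [mul_ite, mul_one, mul_zero]
      rw [Finset.sum_ite_mem, Finset.univ_inter]
    calc ∑ i, a i * c i
        = ∑ i, (a i * (if i ∈ U' then (1:ℤ) else 0) - a i * (if i ∈ W' then (1:ℤ) else 0)) := by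
          apply Finset.sum_congr rfl; intro i _; rw [hcdef]; ring
      _ = (∑ i ∈ U', a i) - ∑ i ∈ W', a i := by
          rw [Finset.sum_sub_distrib, e1, e1]
      _ = 0 := by omega
  have hbP : ∑ i, a i * (z i + c i) = b := by
    have h' : ∑ i, a i * (z i + c i) = (∑ i, a i * z i) + ∑ i, a i * c i := by
      rw [← Finset.sum_add_distrib]; apply Finset.sum_congr rfl; intro i _; ring
    rw [h', hzb, hc_sum, add_zero]
  have hbM : ∑ i, a i * (z i - c i) = b := by
    have h' : ∑ i, a i * (z i - c i) = (∑ i, a i * z i) - ∑ i, a i * c i := by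
      rw [← Finset.sum_sub_distrib]; apply Finset.sum_congr rfl; intro i _; ring
    rw [h', hzb, hc_sum, sub_zero]
  -- the two points
  set xP : Fin n → ℝ := fun i => ((z i + c i : ℤ) : ℝ) with hxP
  set xM : Fin n → ℝ := fun i => ((z i - c i : ℤ) : ℝ) with hxM
  have hxPS : xP ∈ S := ⟨fun i => z i + c i, hfeasP, hbP, rfl⟩
  have hxMS : xM ∈ S := ⟨fun i => z i - c i, hfeasM, hbM, rfl⟩
  obtain ⟨i₀, hi₀⟩ : ∃ i, c i ≠ 0 := by
    rcases hne with ⟨i, hi'⟩ | ⟨i, hi'⟩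
    · exact ⟨i, by rw [hcU' i hi']; norm_num⟩
    · exact ⟨i, by rw [hcW' i hi']; norm_num⟩
  have hxPv : xP ≠ v := by
    intro h
    apply hi₀
    have h1 := congrFun h i₀
    rw [hvz] at h1
    simp only [hxP] at h1
    have h2 : ((z i₀ + c i₀ : ℤ) : ℝ) = ((z i₀ : ℤ) : ℝ) := h1
    have h3 : (z i₀ : ℝ) + c i₀ = z i₀ := by push_cast at h2 ⊢; linarith
    have h4 : (c i₀ : ℝ) = 0 := by linarith
    exact_mod_cast h4
  have hxMv : xM ≠ v := by
    intro h
    apply hi₀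
    have h1 := congrFun h i₀
    rw [hvz] at h1
    simp only [hxM] at h1
    have h2 : ((z i₀ - c i₀ : ℤ) : ℝ) = ((z i₀ : ℤ) : ℝ) := h1
    have h3 : (z i₀ : ℝ) - c i₀ = z i₀ := by push_cast at h2 ⊢; linarith
    have h4 : (c i₀ : ℝ) = 0 := by linarith
    exact_mod_cast h4
  -- v is a midpoint of two other points of the hull: contradiction
  have hmid : v = (1/2 : ℝ) • xP + (1/2 : ℝ) • xM := by
    funext i
    rw [hvz]
    simp only [Pi.add_apply, Pi.smul_apply, smul_eq_mul, hxP, hxM]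
    push_cast
    ring
  apply hvX
  have hmem : ∀ x, x ∈ S → x ≠ v → x ∈ convexHull ℝ (knapsackHull a b \ {v}) := by
    intro x hxS hxv
    exact subset_convexHull ℝ _ ⟨subset_convexHull ℝ S hxS, hxv⟩
  have hm2 : (1/2:ℝ) • xP + (1/2:ℝ) • xM ∈ convexHull ℝ (knapsackHull a b \ {v}) := by
    refine (convex_convexHull ℝ _) (hmem xP hxPS hxPv) (hmem xM hxMS hxMv)
      ?_ ?_ ?_ <;> norm_num
  exact Set.mem_of_eq_of_mem hmid hm2
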